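/- Let $\sigma_1, \ldots, \sigma_n > 0$ and let $\mathcal{A}$ be the $(n-1)\times(n-1)$ tridiagonal matrix with diagonal entries $\mathcal{A}_{kk} = \sigma_k^2 + \sigma_{k+1}^2$ and off-diagonal entries $\mathcal{A}_{k,k+1} = \mathcal{A}_{k+1,k} = -\sigma_{k+1}^2$. Then for $1 \leq j \leq k \leq n-1$, the determinant of the submatrix $\mathcal{A}^{j,k}$ obtained by deleting the $j$-th row and $k$-th column of $\mathcal{A}$ satisfies $(-1)^{j+k} \det(\mathcal{A}^{j,k}) = \sigma_1^2 \sigma_2^2 \cdots \sigma_n^2 \left(\sum_{\ell=1}^{j} \sigma_\ell^{-2}\right)\left(\sum_{\ell=k+1}^{n} \sigma_\ell^{-2}\right)$. -/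

import Mathlib

open Finset

namespace CofAux

noncomputable def sp (σ : ℕ → ℝ) (j : ℕ) : ℝ := ∑ ℓ ∈ Finset.Icc 1 j, ((σ ℓ) ^ 2)⁻¹

noncomputable def tp (σ : ℕ → ℝ) (n k : ℕ) : ℝ := ∑ ℓ ∈ Finset.Icc k n, ((σ ℓ) ^ 2)⁻¹

lemma sp_zero (σ : ℕ → ℝ) : sp σ 0 = 0 := by simp [sp]

lemma sp_succ (σ : ℕ → ℝ) (j : ℕ) : sp σ (j + 1) = sp σ j + ((σ (j + 1)) ^ 2)⁻¹ := by
  unfold sp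
  rw [Finset.sum_Icc_succ_top (by omega)]

lemma tp_top (σ : ℕ → ℝ) (n : ℕ) : tp σ n (n + 1) = 0 := by simp [tp]

lemma tp_bot (σ : ℕ → ℝ) (n k : ℕ) (h : k ≤ n) :
    tp σ n k = ((σ k) ^ 2)⁻¹ + tp σ n (k + 1) := by
  unfold tp
  rw [← Finset.Ico_add_one_right_eq_Icc, ← Finset.Ico_add_one_right_eq_Icc,
    Finset.sum_eq_sum_Ico_succ_bot (by omega)]

lemma sp_add_tp (σ : ℕ → ℝ) (n j : ℕ) (h : j ≤ n) :
    sp σ j + tp σ n (j + 1) = sp σ n := by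
  unfold sp tp
  rw [← Finset.Ico_add_one_right_eq_Icc, ← Finset.Ico_add_one_right_eq_Icc, ← Finset.Ico_add_one_right_eq_Icc,
    Finset.sum_Ico_consecutive _ (by omega) (by omega)]

lemma sp_pos (σ : ℕ → ℝ) (n : ℕ) (hσ : ∀ k, 1 ≤ k → k ≤ n → 0 < σ k) (j : ℕ)
    (h1 : 1 ≤ j) (h2 : j ≤ n) : 0 < sp σ j := by
  apply Finset.sum_pos
  · intro ℓ hℓ
    simp only [Finset.mem_Icc] at hℓ
    have := hσ ℓ hℓ.1 (le_trans hℓ.2 h2)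
    positivity
  · exact ⟨1, by simp [Finset.mem_Icc]; omega⟩

lemma sum_eq_two {N : ℕ} (f : Fin N → ℝ) (i j : Fin N) (hij : i ≠ j)
    (h : ∀ x, x ≠ i → x ≠ j → f x = 0) : ∑ x, f x = f i + f j := by
  rw [← Finset.sum_subset (Finset.subset_univ ({i, j} : Finset (Fin N)))
    (fun x _ hx => by
      simp only [Finset.mem_insert, Finset.mem_singleton, not_or] at hx
      exact h x hx.1 hx.2)]
  rw [Finset.sum_pair hij]

lemma sum_eq_three {N : ℕ} (f : Fin N → ℝ) (i j k : Fin N) (hij : i ≠ j) (hik : i ≠ k)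
    (hjk : j ≠ k) (h : ∀ x, x ≠ i → x ≠ j → x ≠ k → f x = 0) :
    ∑ x, f x = f i + f j + f k := by
  rw [← Finset.sum_subset (Finset.subset_univ ({i, j, k} : Finset (Fin N)))
    (fun x _ hx => by
      simp only [Finset.mem_insert, Finset.mem_singleton, not_or] at hx
      exact h x hx.1 hx.2.1 hx.2.2)]
  rw [Finset.sum_insert (by simp [hij, hik]), Finset.sum_pair hjk, add_assoc]

lemma teles (g : ℕ → ℝ) (N : ℕ) (h : ∀ k, k ≤ N → g k ≠ 0) :
    ∏ k ∈ Finset.range N, (g (k + 1) / g k) = g N / g 0 := by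
  induction N with
  | zero => simp [div_self (h 0 le_rfl)]
  | succ N ih =>
      rw [Finset.prod_range_succ, ih (fun k hk => h k (by omega))]
      rw [div_mul_div_comm, mul_comm, mul_div_mul_right _ _ (h N (by omega))]


noncomputable def Lm (m : ℕ) (σ : ℕ → ℝ) : Matrix (Fin (m + 1)) (Fin (m + 1)) ℝ :=
  Matrix.of fun i k => if (i : ℕ) = (k : ℕ) then 1
    else if (i : ℕ) = (k : ℕ) + 1 then -(sp σ ((k : ℕ) + 1) / sp σ ((k : ℕ) + 2)) else 0

noncomputable def Um (m : ℕ) (σ : ℕ → ℝ) : Matrix (Fin (m + 1)) (Fin (m + 1)) ℝ :=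
  Matrix.of fun k j => if (k : ℕ) = (j : ℕ) then
      σ ((k : ℕ) + 2) ^ 2 * (sp σ ((k : ℕ) + 2) / sp σ ((k : ℕ) + 1))
    else if (j : ℕ) = (k : ℕ) + 1 then -(σ ((k : ℕ) + 2)) ^ 2 else 0

lemma lu (m : ℕ) (σ : ℕ → ℝ) (hσ : ∀ k, 1 ≤ k → k ≤ m + 2 → 0 < σ k)
    (A : Matrix (Fin (m + 1)) (Fin (m + 1)) ℝ)
    (hA : ∀ i j : Fin (m + 1), A i j =
      if i = j then σ ((i : ℕ) + 1) ^ 2 + σ ((i : ℕ) + 2) ^ 2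
      else if (j : ℕ) = (i : ℕ) + 1 then -(σ ((i : ℕ) + 2)) ^ 2
      else if (i : ℕ) = (j : ℕ) + 1 then -(σ ((i : ℕ) + 1)) ^ 2
      else 0) : A = Lm m σ * Um m σ := by
  have hne : ∀ k, 1 ≤ k → k ≤ m + 2 → (σ k) ^ 2 ≠ 0 := fun k h1 h2 => by
    have := hσ k h1 h2; positivity
  have hsne : ∀ j, 1 ≤ j → j ≤ m + 2 → sp σ j ≠ 0 := fun j h1 h2 =>
    ne_of_gt (sp_pos σ (m + 2) hσ j h1 h2)
  ext i j
  rcases i with ⟨iv, hiv⟩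
  rcases j with ⟨jv, hjv⟩
  rw [Matrix.mul_apply, hA]
  simp only [Lm, Um, Matrix.of_apply, Fin.mk.injEq]
  rcases Nat.eq_zero_or_pos iv with h0 | h0
  · subst h0
    rw [Fintype.sum_eq_single (⟨0, hiv⟩ : Fin (m + 1)) (fun x hx => by
      have hv : (x : ℕ) ≠ 0 := fun h => hx (Fin.ext h)
      have c1 : ¬ ((⟨0, hiv⟩ : Fin (m + 1)) : ℕ) = (x : ℕ) := by simpa using hv.symm
      have c2 : ¬ ((⟨0, hiv⟩ : Fin (m + 1)) : ℕ) = (x : ℕ) + 1 := by simp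
      rw [if_neg c1, if_neg c2, zero_mul])]
    have n1 := hne 1 (by omega) (by omega)
    have n2 := hne 2 (by omega) (by omega)
    have s1 := hsne 1 (by omega) (by omega)
    have E1 : sp σ 1 = ((σ 1) ^ 2)⁻¹ := by
      have h := sp_succ σ 0; simp only [sp_zero, zero_add] at h; exact h
    have F1 : σ 1 ^ 2 * sp σ 1 = 1 := by rw [E1]; exact mul_inv_cancel₀ n1
    have F2 : σ 2 ^ 2 * sp σ 2 = σ 2 ^ 2 * sp σ 1 + 1 := by
      rw [sp_succ σ 1, mul_add, mul_inv_cancel₀ n2]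
    simp only [Fin.val_mk, Nat.zero_add]
    split_ifs <;>
      first
        | (exfalso; omega)
        | (exact (‹False›).elim)
        | ring1
        | (field_simp [n1, n2, s1]; done)
        | (field_simp [n1, n2, s1]; ring1; done)
        | (field_simp [n1, n2, s1]; linear_combination F1 - F2)
  · obtain ⟨w, rfl⟩ : ∃ w, iv = w + 1 := ⟨iv - 1, by omega⟩
    rw [sum_eq_two _ ⟨w, by omega⟩ ⟨w + 1, hiv⟩
      (by simp [Fin.ext_iff])
      (fun x h1 h2 => by
        have hv1 : (x : ℕ) ≠ w := fun h => h1 (Fin.ext h)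
        have hv2 : (x : ℕ) ≠ w + 1 := fun h => h2 (Fin.ext h)
        have c1 : ¬ ((⟨w + 1, hiv⟩ : Fin (m + 1)) : ℕ) = (x : ℕ) := by
          simp only [Fin.val_mk]; omega
        have c2 : ¬ ((⟨w + 1, hiv⟩ : Fin (m + 1)) : ℕ) = (x : ℕ) + 1 := by
          simp only [Fin.val_mk]; omega
        rw [if_neg c1, if_neg c2, zero_mul])]
    have nw2 := hne (w + 2) (by omega) (by omega)
    have nw3 := hne (w + 3) (by omega) (by omega)
    have sw1 := hsne (w + 1) (by omega) (by omega)
    have sw2 := hsne (w + 2) (by omega) (by omega)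
    have E2 : sp σ (w + 2) = sp σ (w + 1) + ((σ (w + 2)) ^ 2)⁻¹ := by
      have h := sp_succ σ (w + 1); rwa [show w + 1 + 1 = w + 2 by omega] at h
    have E3 : sp σ (w + 3) = sp σ (w + 2) + ((σ (w + 3)) ^ 2)⁻¹ := by
      have h := sp_succ σ (w + 2); rwa [show w + 2 + 1 = w + 3 by omega] at h
    have F2 : σ (w + 2) ^ 2 * sp σ (w + 2) = σ (w + 2) ^ 2 * sp σ (w + 1) + 1 := by
      rw [E2, mul_add, mul_inv_cancel₀ nw2]
    have F3 : σ (w + 3) ^ 2 * sp σ (w + 3) = σ (w + 3) ^ 2 * sp σ (w + 2) + 1 := by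
      rw [E3, mul_add, mul_inv_cancel₀ nw3]
    simp only [Fin.val_mk, show w + 1 + 1 = w + 2 by omega, show w + 1 + 2 = w + 3 by omega]
    split_ifs <;>
      first
        | (exfalso; omega)
        | (exact (‹False›).elim)
        | ring1
        | (field_simp [nw2, nw3, sw1, sw2]; done)
        | (field_simp [nw2, nw3, sw1, sw2]; ring1; done)
        | (field_simp [nw2, nw3, sw1, sw2]; linear_combination F2 - F3)

lemma detA (m : ℕ) (σ : ℕ → ℝ) (hσ : ∀ k, 1 ≤ k → k ≤ m + 2 → 0 < σ k)
    (A : Matrix (Fin (m + 1)) (Fin (m + 1)) ℝ)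
    (hA : ∀ i j : Fin (m + 1), A i j =
      if i = j then σ ((i : ℕ) + 1) ^ 2 + σ ((i : ℕ) + 2) ^ 2
      else if (j : ℕ) = (i : ℕ) + 1 then -(σ ((i : ℕ) + 2)) ^ 2
      else if (i : ℕ) = (j : ℕ) + 1 then -(σ ((i : ℕ) + 1)) ^ 2
      else 0) :
    A.det = (∏ ℓ ∈ Finset.Icc 1 (m + 2), (σ ℓ) ^ 2) * sp σ (m + 2) := by
  have hsne : ∀ j, 1 ≤ j → j ≤ m + 2 → sp σ j ≠ 0 := fun j h1 h2 =>
    ne_of_gt (sp_pos σ (m + 2) hσ j h1 h2)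
  have hdL : (Lm m σ).det = 1 := by
    rw [Matrix.det_of_lowerTriangular (Lm m σ) (fun i j hij => by
      have h0 : i < j := hij
      have h : (i : ℕ) < (j : ℕ) := h0
      simp only [Lm, Matrix.of_apply]
      rw [if_neg (by omega), if_neg (by omega)])]
    simp [Lm]
  have hdU : (Um m σ).det =
      ∏ k : Fin (m + 1), (σ ((k : ℕ) + 2) ^ 2 * (sp σ ((k : ℕ) + 2) / sp σ ((k : ℕ) + 1))) := by
    rw [Matrix.det_of_upperTriangular (M := Um m σ) (fun i j hij => by
      have h0 : j < i := hij
      have hji : (j : ℕ) < (i : ℕ) := h0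
      simp only [Um, Matrix.of_apply]
      rw [if_neg (by omega), if_neg (by omega)])]
    refine Finset.prod_congr rfl fun k _ => by simp [Um]
  rw [lu m σ hσ A hA, Matrix.det_mul, hdL, hdU, one_mul]
  rw [Finset.prod_mul_distrib]
  have h1 : ∏ k : Fin (m + 1), σ ((k : ℕ) + 2) ^ 2
      = ∏ k ∈ Finset.range (m + 1), σ (k + 2) ^ 2 :=
    Fin.prod_univ_eq_prod_range (fun k => σ (k + 2) ^ 2) (m + 1)
  have h2 : ∏ k : Fin (m + 1), (sp σ ((k : ℕ) + 2) / sp σ ((k : ℕ) + 1))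
      = sp σ (m + 2) / sp σ 1 := by
    rw [show (∏ k : Fin (m + 1), (sp σ ((k : ℕ) + 2) / sp σ ((k : ℕ) + 1)))
        = ∏ k ∈ Finset.range (m + 1), (sp σ (k + 2) / sp σ (k + 1)) from
      Fin.prod_univ_eq_prod_range (fun k => sp σ (k + 2) / sp σ (k + 1)) (m + 1)]
    have := teles (fun k => sp σ (k + 1)) (m + 1)
      (fun k hk => hsne (k + 1) (by omega) (by omega))
    rw [← this]
  rw [h1, h2]
  have hP : ∏ ℓ ∈ Finset.Icc 1 (m + 2), (σ ℓ) ^ 2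
      = (∏ k ∈ Finset.range (m + 1), σ (k + 2) ^ 2) * σ 1 ^ 2 := by
    rw [← Finset.Ico_add_one_right_eq_Icc, Finset.prod_Ico_eq_prod_range]
    rw [show m + 2 + 1 - 1 = m + 2 by omega, Finset.prod_range_succ']
    congr 1
    refine Finset.prod_congr rfl fun k _ => by rw [show 1 + (k + 1) = k + 2 by omega]
  rw [hP]
  have hs1 : sp σ 1 = ((σ 1) ^ 2)⁻¹ := by
    have h := sp_succ σ 0; simp only [sp_zero, zero_add] at h; exact h
  have n1 : (σ 1) ^ 2 ≠ 0 := by have := hσ 1 (by omega) (by omega); positivity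
  rw [hs1]
  field_simp


noncomputable def Mm (m : ℕ) (σ : ℕ → ℝ) : Matrix (Fin (m + 1)) (Fin (m + 1)) ℝ :=
  Matrix.of fun i j => if (i : ℕ) ≤ (j : ℕ) then
      sp σ ((i : ℕ) + 1) * tp σ (m + 2) ((j : ℕ) + 2)
    else sp σ ((j : ℕ) + 1) * tp σ (m + 2) ((i : ℕ) + 2)

set_option maxHeartbeats 2000000 in
lemma AM (m : ℕ) (σ : ℕ → ℝ) (hσ : ∀ k, 1 ≤ k → k ≤ m + 2 → 0 < σ k)
    (A : Matrix (Fin (m + 1)) (Fin (m + 1)) ℝ)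
    (hA : ∀ i j : Fin (m + 1), A i j =
      if i = j then σ ((i : ℕ) + 1) ^ 2 + σ ((i : ℕ) + 2) ^ 2
      else if (j : ℕ) = (i : ℕ) + 1 then -(σ ((i : ℕ) + 2)) ^ 2
      else if (i : ℕ) = (j : ℕ) + 1 then -(σ ((i : ℕ) + 1)) ^ 2
      else 0) :
    A * Mm m σ = sp σ (m + 2) • (1 : Matrix (Fin (m + 1)) (Fin (m + 1)) ℝ) := by
  have hne : ∀ k, 1 ≤ k → k ≤ m + 2 → (σ k) ^ 2 ≠ 0 := fun k h1 h2 => by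
    have := hσ k h1 h2; positivity
  have T0 : tp σ (m + 2) (m + 3) = 0 := by
    have h := tp_top σ (m + 2); rwa [show m + 2 + 1 = m + 3 by omega] at h
  ext i j
  rcases i with ⟨iv, hiv⟩
  rcases j with ⟨jv, hjv⟩
  rw [Matrix.mul_apply]
  simp only [hA, Mm, Matrix.of_apply, Matrix.smul_apply, Matrix.one_apply, Fin.mk.injEq,
    smul_eq_mul, Fin.val_mk]
  rcases Nat.eq_zero_or_pos iv with h0 | h0
  · subst h0
    have n1 := hne 1 (by omega) (by omega)
    have n2 := hne 2 (by omega) (by omega)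
    have n1' : σ 1 ≠ 0 := by have := hσ 1 (by omega) (by omega); positivity
    have n2' : σ 2 ≠ 0 := by have := hσ 2 (by omega) (by omega); positivity
    have S1 : sp σ 1 = ((σ 1) ^ 2)⁻¹ := by
      have h := sp_succ σ 0; simp only [sp_zero, zero_add] at h; exact h
    have Et2 : tp σ (m + 2) 2 = ((σ 2) ^ 2)⁻¹ + tp σ (m + 2) 3 := by
      have h := tp_bot σ (m + 2) 2 (by omega); rwa [show 2 + 1 = 3 by omega] at h
    have Hd : sp σ (m + 2) = sp σ 1 + tp σ (m + 2) 2 := (sp_add_tp σ (m + 2) 1 (by omega)).symm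
    rcases Nat.eq_zero_or_pos m with hm | hm
    · subst hm
      have Et2' : tp σ 2 2 = ((σ 2) ^ 2)⁻¹ + tp σ 2 3 := by
        have h := tp_bot σ 2 2 (by omega); rwa [show (2 : ℕ) + 1 = 3 by norm_num] at h
      have T0' : tp σ 2 3 = 0 := by
        have h := tp_top σ 2; rwa [show (2 : ℕ) + 1 = 3 by norm_num] at h
      have Hd' : sp σ 2 = sp σ 1 + tp σ 2 2 := by
        have h := sp_add_tp σ 2 1 (by omega)
        rw [show (1 : ℕ) + 1 = 2 by norm_num] at h; exact h.symm
      rw [Fintype.sum_eq_single (⟨0, hiv⟩ : Fin 1)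
        (fun x hx => absurd (Subsingleton.elim x _) hx)]
      simp only [Fin.val_mk, Nat.zero_add]
      split_ifs <;>
        first
          | (exfalso; omega)
          | (exact (‹False›).elim)
          | ring1
          | (simp only [show jv = 0 by omega, Hd', S1, Et2', T0']; field_simp; ring1)
          | (simp only [show jv = 0 by omega, Hd', S1, Et2', T0']; field_simp)
    · rw [sum_eq_two _ (⟨0, by omega⟩ : Fin (m + 1)) ⟨1, by omega⟩
        (by simp [Fin.ext_iff])
        (fun x h1 h2 => by
          have hv1 : (x : ℕ) ≠ 0 := fun h => h1 (Fin.ext h)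
          have hv2 : (x : ℕ) ≠ 1 := fun h => h2 (Fin.ext h)
          have c1 : ¬ ((⟨0, hiv⟩ : Fin (m + 1)) = x) := fun h => hv1 (congrArg Fin.val h).symm
          have c2 : ¬ ((jv : ℕ) = ((⟨0, hiv⟩ : Fin (m + 1)) : ℕ) + 1) ∨ True := Or.inr trivial
          rw [if_neg c1, if_neg (show ¬ ((x : ℕ) = ((⟨0, hiv⟩ : Fin (m + 1)) : ℕ) + 1) by
              simp only [Fin.val_mk]; omega),
            if_neg (show ¬ (((⟨0, hiv⟩ : Fin (m + 1)) : ℕ) = (x : ℕ) + 1) by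
              simp only [Fin.val_mk]; omega), zero_mul])]
      have Es2 : sp σ 2 = sp σ 1 + ((σ 2) ^ 2)⁻¹ := by
        have h := sp_succ σ 1; rwa [show 1 + 1 = 2 by omega] at h
      simp only [Fin.mk.injEq, Fin.val_mk, Nat.zero_add, show (1 : ℕ) + 1 = 2 by omega,
        show (1 : ℕ) + 2 = 3 by omega]
      split_ifs <;>
        first
          | (exfalso; omega)
          | (exact (‹False›).elim)
          | ring1
          | (simp only [show jv = 0 by omega, Hd, S1, Es2, Et2]; field_simp; ring1)
          | (simp only [Hd, S1, Es2, Et2]; field_simp; ring1)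
          | (simp only [Hd, S1, Es2, Et2]; field_simp)
  · obtain ⟨w, rfl⟩ : ∃ w, iv = w + 1 := ⟨iv - 1, by omega⟩
    have nw2 := hne (w + 2) (by omega) (by omega)
    have Es2 : sp σ (w + 2) = sp σ (w + 1) + ((σ (w + 2)) ^ 2)⁻¹ := by
      have h := sp_succ σ (w + 1); rwa [show w + 1 + 1 = w + 2 by omega] at h
    have Et2 : tp σ (m + 2) (w + 2) = ((σ (w + 2)) ^ 2)⁻¹ + tp σ (m + 2) (w + 3) := by
      have h := tp_bot σ (m + 2) (w + 2) (by omega)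
      rwa [show w + 2 + 1 = w + 3 by omega] at h
    have nw3 := hne (w + 3) (by omega) (by omega)
    have nw2' : σ (w + 2) ≠ 0 := by have := hσ (w + 2) (by omega) (by omega); positivity
    have nw3' : σ (w + 3) ≠ 0 := by have := hσ (w + 3) (by omega) (by omega); positivity
    have Et3 : tp σ (m + 2) (w + 3) = ((σ (w + 3)) ^ 2)⁻¹ + tp σ (m + 2) (w + 4) := by
      have h := tp_bot σ (m + 2) (w + 3) (by omega)
      rwa [show w + 3 + 1 = w + 4 by omega] at h
    have Hd : sp σ (m + 2) = sp σ (w + 2) + tp σ (m + 2) (w + 3) := by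
      have h := sp_add_tp σ (m + 2) (w + 2) (by omega)
      rw [show w + 2 + 1 = w + 3 by omega] at h; exact h.symm
    by_cases hm : w + 1 = m
    · -- last row: two points w, w+1
      have T0w : tp σ (m + 2) (w + 4) = 0 := by
        have h := T0; rwa [show m + 3 = w + 4 by omega] at h
      rw [sum_eq_two _ (⟨w, by omega⟩ : Fin (m + 1)) ⟨w + 1, hiv⟩
        (by simp [Fin.ext_iff])
        (fun x h1 h2 => by
          have hv1 : (x : ℕ) ≠ w := fun h => h1 (Fin.ext h)
          have hv2 : (x : ℕ) ≠ w + 1 := fun h => h2 (Fin.ext h)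
          have c1 : ¬ ((⟨w + 1, hiv⟩ : Fin (m + 1)) = x) := fun h => hv2 (congrArg Fin.val h).symm
          rw [if_neg c1, if_neg (show ¬ ((x : ℕ) = ((⟨w + 1, hiv⟩ : Fin (m + 1)) : ℕ) + 1) by
              simp only [Fin.val_mk]; omega),
            if_neg (show ¬ (((⟨w + 1, hiv⟩ : Fin (m + 1)) : ℕ) = (x : ℕ) + 1) by
              simp only [Fin.val_mk]; omega), zero_mul])]
      simp only [Fin.mk.injEq, Fin.val_mk, show w + 1 + 1 = w + 2 by omega, show w + 1 + 2 = w + 3 by omega,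
        show w + 2 + 1 = w + 3 by omega, show w + 2 + 2 = w + 4 by omega]
      split_ifs <;>
        first
          | (exfalso; omega)
          | (exact (‹False›).elim)
          | ring1
          | (simp only [show jv = w by omega, Hd, Es2, Et2, Et3, T0w]; field_simp; ring1)
          | (simp only [show jv = w + 1 by omega, Hd, Es2, Et2, Et3, T0w]; field_simp; ring1)
          | (simp only [Hd, Es2, Et2, Et3, T0w]; field_simp; ring1)
          | (simp only [Hd, Es2, Et2, Et3, T0w]; field_simp)
    · -- interior: three points w, w+1, w+2
      have Es3 : sp σ (w + 3) = sp σ (w + 2) + ((σ (w + 3)) ^ 2)⁻¹ := by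
        have h := sp_succ σ (w + 2); rwa [show w + 2 + 1 = w + 3 by omega] at h
      rw [sum_eq_three _ (⟨w, by omega⟩ : Fin (m + 1)) ⟨w + 1, hiv⟩ ⟨w + 2, by omega⟩
        (by simp [Fin.ext_iff]) (by simp [Fin.ext_iff]) (by simp [Fin.ext_iff])
        (fun x h1 h2 h3 => by
          have hv1 : (x : ℕ) ≠ w := fun h => h1 (Fin.ext h)
          have hv2 : (x : ℕ) ≠ w + 1 := fun h => h2 (Fin.ext h)
          have hv3 : (x : ℕ) ≠ w + 2 := fun h => h3 (Fin.ext h)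
          have c1 : ¬ ((⟨w + 1, hiv⟩ : Fin (m + 1)) = x) := fun h => hv2 (congrArg Fin.val h).symm
          rw [if_neg c1, if_neg (show ¬ ((x : ℕ) = ((⟨w + 1, hiv⟩ : Fin (m + 1)) : ℕ) + 1) by
              simp only [Fin.val_mk]; omega),
            if_neg (show ¬ (((⟨w + 1, hiv⟩ : Fin (m + 1)) : ℕ) = (x : ℕ) + 1) by
              simp only [Fin.val_mk]; omega), zero_mul])]
      simp only [Fin.mk.injEq, Fin.val_mk, show w + 1 + 1 = w + 2 by omega, show w + 1 + 2 = w + 3 by omega,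
        show w + 2 + 1 = w + 3 by omega, show w + 2 + 2 = w + 4 by omega]
      split_ifs <;>
        first
          | (exfalso; omega)
          | (exact (‹False›).elim)
          | ring1
          | (simp only [show jv = w by omega, Hd, Es2, Es3, Et2, Et3]; field_simp; ring1)
          | (simp only [show jv = w + 1 by omega, Hd, Es2, Es3, Et2, Et3]; field_simp; ring1)
          | (simp only [show jv = w + 2 by omega, Hd, Es2, Es3, Et2, Et3]; field_simp; ring1)
          | (simp only [Hd, Es2, Es3, Et2, Et3]; field_simp; ring1)
          | (simp only [Hd, Es2, Es3, Et2, Et3]; field_simp)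


end CofAux

/-- Cofactor formula for the tridiagonal spacings covariance matrix `A` (size `(n-1)×(n-1)`,
here `n = m + 2`): for `j ≤ k`, `(-1)^(j+k) det(A^{j,k}) = (∏ σ_ℓ²)(∑_{ℓ≤j} σ_ℓ⁻²)(∑_{ℓ>k} σ_ℓ⁻²)`. -/
theorem cofactor_formula
    (m : ℕ) (σ : ℕ → ℝ) (hσ : ∀ k, 1 ≤ k → k ≤ m + 2 → 0 < σ k)
    (A : Matrix (Fin (m + 1)) (Fin (m + 1)) ℝ)
    (hA : ∀ i j : Fin (m + 1), A i j =
      if i = j then σ ((i : ℕ) + 1) ^ 2 + σ ((i : ℕ) + 2) ^ 2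
      else if (j : ℕ) = (i : ℕ) + 1 then -(σ ((i : ℕ) + 2)) ^ 2
      else if (i : ℕ) = (j : ℕ) + 1 then -(σ ((i : ℕ) + 1)) ^ 2
      else 0)
    (a b : Fin (m + 1)) (hab : (a : ℕ) ≤ (b : ℕ)) :
    (-1 : ℝ) ^ (((a : ℕ) + 1) + ((b : ℕ) + 1)) *
        Matrix.det (A.submatrix a.succAbove b.succAbove) =
      (∏ ℓ ∈ Finset.Icc 1 (m + 2), (σ ℓ) ^ 2) *
        (∑ ℓ ∈ Finset.Icc 1 ((a : ℕ) + 1), ((σ ℓ) ^ 2)⁻¹) *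
        (∑ ℓ ∈ Finset.Icc ((b : ℕ) + 2) (m + 2), ((σ ℓ) ^ 2)⁻¹) := by
  classical
  have hdet := CofAux.detA m σ hσ A hA
  have hAM := CofAux.AM m σ hσ A hA
  have hPpos : 0 < ∏ ℓ ∈ Finset.Icc 1 (m + 2), (σ ℓ) ^ 2 :=
    Finset.prod_pos (fun ℓ hℓ => by
      simp only [Finset.mem_Icc] at hℓ
      have := hσ ℓ hℓ.1 hℓ.2; positivity)
  have hspos : 0 < CofAux.sp σ (m + 2) :=
    CofAux.sp_pos σ (m + 2) hσ (m + 2) (by omega) le_rfl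
  have hsne : CofAux.sp σ (m + 2) ≠ 0 := ne_of_gt hspos
  have hdetne : A.det ≠ 0 := by rw [hdet]; exact ne_of_gt (mul_pos hPpos hspos)
  have hinv : A⁻¹ = (CofAux.sp σ (m + 2))⁻¹ • CofAux.Mm m σ := by
    apply Matrix.inv_eq_right_inv
    rw [Matrix.mul_smul, hAM, smul_smul, inv_mul_cancel₀ hsne, one_smul]
  have hadj : A.adjugate = (∏ ℓ ∈ Finset.Icc 1 (m + 2), (σ ℓ) ^ 2) • CofAux.Mm m σ := by
    have h2 : A.det • A⁻¹ = A.adjugate := by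
      rw [Matrix.inv_def, Ring.inverse_eq_inv, smul_smul, mul_inv_cancel₀ hdetne, one_smul]
    rw [← h2, hinv, hdet, smul_smul]
    congr 1
    field_simp
  have key : A.adjugate b a =
      (-1 : ℝ) ^ ((a : ℕ) + (b : ℕ)) * Matrix.det (A.submatrix a.succAbove b.succAbove) :=
    Matrix.adjugate_fin_succ_eq_det_submatrix A b a
  have hM : CofAux.Mm m σ b a =
      CofAux.sp σ ((a : ℕ) + 1) * CofAux.tp σ (m + 2) ((b : ℕ) + 2) := by
    simp only [CofAux.Mm, Matrix.of_apply]
    rcases eq_or_lt_of_le hab with h | h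
    · rw [if_pos (by omega), h]
    · rw [if_neg (by omega)]
  have hpow : (-1 : ℝ) ^ (((a : ℕ) + 1) + ((b : ℕ) + 1))
      = (-1 : ℝ) ^ ((a : ℕ) + (b : ℕ)) := by
    rw [show ((a : ℕ) + 1) + ((b : ℕ) + 1) = ((a : ℕ) + (b : ℕ)) + 2 by omega, pow_add]
    norm_num
  rw [hpow, ← key, hadj, Matrix.smul_apply, hM, smul_eq_mul]
  simp only [CofAux.sp, CofAux.tp, mul_assoc]
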